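/- For all α, β > 0 and every integer n ≥ 1, the n-th moment of the Bessel distribution is given by the convergent series ∫_{[0,∞)} x^n m_{α,β}(dx) = (e^{−α}/β^n) Σ_{k=0}^∞ α^{k+1} (n+k)! / (k!(k+1)!). -/

import Mathlib

open MeasureTheory Filter Set
open scoped ENNReal
open scoped NNReal

/-- The modified Bessel function of the first kind of order one,
`I₁(r) = (r/2) Σ_{k=0}^∞ (r²/4)^k / (k!(k+1)!)`. -/
noncomputable def besselI1 (r : ℝ) : ℝ :=
  r / 2 * ∑' k : ℕ, (r ^ 2 / 4) ^ k / ((Nat.factorial k : ℝ) * (Nat.factorial (k + 1) : ℝ))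

/-- The Bessel distribution `m_{α,β}` on `[0,∞)`:
`m_{α,β}(dx) = e^{−α} δ₀(dx) + β e^{−α−βx} √(α/(βx)) I₁(2√(αβx)) dx`. -/
noncomputable def besselMeasure (α β : ℝ) : Measure ℝ :=
  ENNReal.ofReal (Real.exp (-α)) • Measure.dirac (0 : ℝ) +
    MeasureTheory.volume.withDensity fun x =>
      ENNReal.ofReal (Set.indicator (Set.Ioi (0 : ℝ))
        (fun x => β * Real.exp (-α - β * x) * Real.sqrt (α / (β * x)) *
          besselI1 (2 * Real.sqrt (α * β * x))) x)

lemma bessel_aux_integrableOn (m : ℕ) {b : ℝ} (hb : 0 < b) :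
    IntegrableOn (fun x : ℝ => x ^ m * Real.exp (-b * x)) (Ioi 0) := by
  have h := integrableOn_rpow_mul_exp_neg_mul_rpow (p := 1) (s := m) (b := b)
    (lt_of_lt_of_le neg_one_lt_zero (Nat.cast_nonneg m)) one_pos hb
  refine h.congr_fun (fun x hx => ?_) measurableSet_Ioi
  beta_reduce
  rw [Real.rpow_one, Real.rpow_natCast]

lemma bessel_aux_integral (m : ℕ) {b : ℝ} (hb : 0 < b) :
    ∫ x in Ioi 0, x ^ m * Real.exp (-b * x) = (Nat.factorial m : ℝ) / b ^ (m + 1) := by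
  have h := Real.integral_rpow_mul_exp_neg_mul_Ioi (a := m + 1) (r := b) (by positivity) hb
  rw [show ((m : ℝ) + 1) - 1 = (m : ℝ) by ring] at h
  have h2 : ∫ x in Ioi 0, x ^ m * Real.exp (-b * x)
      = ∫ t in Ioi 0, t ^ (m : ℝ) * Real.exp (-(b * t)) := by
    refine setIntegral_congr_fun measurableSet_Ioi (fun x hx => ?_)
    rw [Real.rpow_natCast, neg_mul]
  rw [h2, h, show ((m : ℝ) + 1) = ((m + 1 : ℕ) : ℝ) by push_cast; ring, Real.rpow_natCast]
  push_cast
  rw [Real.Gamma_nat_eq_factorial, div_pow, one_pow]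
  ring

lemma bessel_aux_summable {α : ℝ} (hα : 0 < α) (n : ℕ) :
    Summable (fun k : ℕ => α ^ (k + 1) * (Nat.factorial (n + k) : ℝ) /
      ((Nat.factorial k : ℝ) * (Nat.factorial (k + 1) : ℝ))) := by
  set a : ℕ → ℝ := fun k => α ^ (k + 1) * (Nat.factorial (n + k) : ℝ) /
      ((Nat.factorial k : ℝ) * (Nat.factorial (k + 1) : ℝ)) with ha
  have hapos : ∀ k, 0 < a k := by
    intro k
    have h1 : (0:ℝ) < (Nat.factorial (n+k) : ℝ) := by exact_mod_cast (n+k).factorial_pos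
    have h2 : (0:ℝ) < (Nat.factorial k : ℝ) := by exact_mod_cast k.factorial_pos
    have h3 : (0:ℝ) < (Nat.factorial (k+1) : ℝ) := by exact_mod_cast (k+1).factorial_pos
    positivity
  apply summable_of_ratio_norm_eventually_le (r := 1/2) (by norm_num)
  filter_upwards [eventually_ge_atTop ⌈2 * α * (n + 1)⌉₊] with k hk
  have hk' : 2 * α * (n + 1) ≤ (k : ℝ) := le_trans (Nat.le_ceil _) (by exact_mod_cast hk)
  have h1 : (0:ℝ) < (Nat.factorial (n+k) : ℝ) := by exact_mod_cast (n+k).factorial_pos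
  have h2 : (0:ℝ) < (Nat.factorial k : ℝ) := by exact_mod_cast k.factorial_pos
  have h3 : (0:ℝ) < (Nat.factorial (k+1) : ℝ) := by exact_mod_cast (k+1).factorial_pos
  have hfac : a (k + 1) = (α * (n + k + 1) / ((k + 1) * (k + 2))) * a k := by
    have e1 : (Nat.factorial (n + (k+1)) : ℝ) = ((n:ℝ) + k + 1) * (Nat.factorial (n+k) : ℝ) := by
      rw [show n + (k+1) = (n+k) + 1 by ring, Nat.factorial_succ]
      push_cast; ring
    have e2 : (Nat.factorial (k+1) : ℝ) = ((k:ℝ) + 1) * (Nat.factorial k : ℝ) := by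
      rw [Nat.factorial_succ]; push_cast; ring
    have e3 : (Nat.factorial (k+2) : ℝ) = ((k:ℝ) + 2) * (Nat.factorial (k+1) : ℝ) := by
      rw [show k + 2 = (k+1) + 1 by ring, Nat.factorial_succ]; push_cast; ring
    simp only [ha]
    rw [e1, e3, e2]
    field_simp
    ring
  have hfactor : α * (n + k + 1) / ((k + 1) * (k + 2)) ≤ 1/2 := by
    rw [div_le_iff₀ (by positivity)]
    have hnk : α * ((n:ℝ) + k + 1) ≤ α * (((n:ℝ) + 1) * (k + 1)) := by
      apply mul_le_mul_of_nonneg_left _ hα.le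
      nlinarith [Nat.cast_nonneg (α := ℝ) n, Nat.cast_nonneg (α := ℝ) k]
    nlinarith [Nat.cast_nonneg (α := ℝ) k, Nat.cast_nonneg (α := ℝ) n, hα.le]
  rw [Real.norm_of_nonneg (hapos _).le, Real.norm_of_nonneg (hapos _).le, hfac]
  exact mul_le_mul_of_nonneg_right hfactor (hapos k).le

lemma bessel_aux_summable_x {t : ℝ} (ht : 0 ≤ t) :
    Summable (fun k : ℕ => t ^ k / ((Nat.factorial k : ℝ) * (Nat.factorial (k + 1) : ℝ))) := by
  refine Summable.of_nonneg_of_le (fun k => by positivity) (fun k => ?_)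
    (Real.summable_pow_div_factorial t)
  have h2 : (0:ℝ) < (Nat.factorial k : ℝ) := by exact_mod_cast k.factorial_pos
  have h3 : (1:ℝ) ≤ (Nat.factorial (k+1) : ℝ) := by exact_mod_cast (k+1).factorial_pos
  calc t ^ k / ((Nat.factorial k : ℝ) * (Nat.factorial (k + 1) : ℝ))
      ≤ t ^ k / ((Nat.factorial k : ℝ) * 1) := by
        apply div_le_div_of_nonneg_left (by positivity) (by positivity)
        exact mul_le_mul_of_nonneg_left h3 h2.le
    _ = t ^ k / (Nat.factorial k : ℝ) := by rw [mul_one]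

lemma bessel_aux_density {α β x : ℝ} (hα : 0 < α) (hβ : 0 < β) (hx : 0 < x) :
    β * Real.exp (-α - β * x) * Real.sqrt (α / (β * x)) *
        besselI1 (2 * Real.sqrt (α * β * x)) =
      ∑' k : ℕ, (Real.exp (-α) * (α * β) * (α * β) ^ k /
          ((Nat.factorial k : ℝ) * (Nat.factorial (k + 1) : ℝ))) * (x ^ k * Real.exp (-β * x)) := by
  have hsq : (2 * Real.sqrt (α * β * x)) ^ 2 / 4 = α * β * x := by
    rw [mul_pow, Real.sq_sqrt (by positivity)]; ring
  have hI : besselI1 (2 * Real.sqrt (α * β * x)) =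
      Real.sqrt (α * β * x) *
        ∑' k : ℕ, (α * β * x) ^ k / ((Nat.factorial k : ℝ) * (Nat.factorial (k + 1) : ℝ)) := by
    rw [besselI1, hsq]; ring
  have hsqrt : Real.sqrt (α / (β * x)) * Real.sqrt (α * β * x) = α := by
    rw [← Real.sqrt_mul (by positivity), show α / (β * x) * (α * β * x) = α ^ 2 by
      field_simp]
    exact Real.sqrt_sq hα.le
  have hexp : Real.exp (-α - β * x) = Real.exp (-α) * Real.exp (-β * x) := by
    rw [← Real.exp_add]; ring_nf
  have hterm : ∀ k : ℕ,
      (Real.exp (-α) * (α * β) * (α * β) ^ k /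
          ((Nat.factorial k : ℝ) * (Nat.factorial (k + 1) : ℝ))) * (x ^ k * Real.exp (-β * x)) =
      (Real.exp (-α) * (α * β) * Real.exp (-β * x)) *
        ((α * β * x) ^ k / ((Nat.factorial k : ℝ) * (Nat.factorial (k + 1) : ℝ))) := by
    intro k
    rw [mul_pow]
    ring
  rw [tsum_congr hterm, tsum_mul_left, hI, hexp]
  rw [show β * (Real.exp (-α) * Real.exp (-β * x)) * Real.sqrt (α / (β * x)) *
      (Real.sqrt (α * β * x) * ∑' k : ℕ, (α * β * x) ^ k /
        ((Nat.factorial k : ℝ) * (Nat.factorial (k + 1) : ℝ)))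
    = (Real.sqrt (α / (β * x)) * Real.sqrt (α * β * x)) * (β * (Real.exp (-α) * Real.exp (-β * x)) *
      ∑' k : ℕ, (α * β * x) ^ k / ((Nat.factorial k : ℝ) * (Nat.factorial (k + 1) : ℝ))) by ring,
    hsqrt]
  ring

theorem bessel_nth_moment (α β : ℝ) (hα : 0 < α) (hβ : 0 < β) (n : ℕ) (hn : 1 ≤ n) :
    Summable (fun k : ℕ =>
        α ^ (k + 1) * (Nat.factorial (n + k) : ℝ) /
          ((Nat.factorial k : ℝ) * (Nat.factorial (k + 1) : ℝ))) ∧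
    Integrable (fun x : ℝ => x ^ n) (besselMeasure α β) ∧
    ∫ x, x ^ n ∂ besselMeasure α β =
      Real.exp (-α) / β ^ n *
        ∑' k : ℕ, α ^ (k + 1) * (Nat.factorial (n + k) : ℝ) /
          ((Nat.factorial k : ℝ) * (Nat.factorial (k + 1) : ℝ)) := by
  have hfac_pos : ∀ m : ℕ, (0:ℝ) < (Nat.factorial m : ℝ) := by
    intro m; exact_mod_cast m.factorial_pos
  set a : ℕ → ℝ := fun k => α ^ (k + 1) * (Nat.factorial (n + k) : ℝ) /
      ((Nat.factorial k : ℝ) * (Nat.factorial (k + 1) : ℝ)) with ha_def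
  set c : ℕ → ℝ := fun k => Real.exp (-α) * (α * β) * (α * β) ^ k /
      ((Nat.factorial k : ℝ) * (Nat.factorial (k + 1) : ℝ)) with hc_def
  have hc_nonneg : ∀ k, 0 ≤ c k := by
    intro k
    have h2 := hfac_pos k
    have h3 := hfac_pos (k+1)
    simp only [hc_def]
    positivity
  set F : ℕ → ℝ → ℝ := fun k => Set.indicator (Set.Ioi (0:ℝ))
      (fun x => c k * (x ^ k * Real.exp (-β * x))) with hF_def
  have hF_nonneg : ∀ k x, 0 ≤ F k x := by
    intro k x
    simp only [hF_def]
    apply Set.indicator_nonneg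
    intro y hy
    have hy0 : (0:ℝ) < y := hy
    exact mul_nonneg (hc_nonneg k) (by positivity)
  have hF_meas : ∀ k, Measurable (F k) := by
    intro k
    simp only [hF_def]
    apply Measurable.indicator _ measurableSet_Ioi
    fun_prop
  set h : ℕ → ℝ → ℝ≥0∞ := fun k x => ENNReal.ofReal (F k x) with hh_def
  have hh_meas : ∀ k, Measurable (h k) := fun k => (hF_meas k).ennreal_ofReal
  -- the measure decomposes as a sum
  have hmeq : besselMeasure α β = ENNReal.ofReal (Real.exp (-α)) • Measure.dirac (0:ℝ) +
      Measure.sum (fun k => MeasureTheory.volume.withDensity (h k)) := by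
    rw [besselMeasure]
    congr 1
    have hD : (fun x => ENNReal.ofReal (Set.indicator (Set.Ioi (0 : ℝ))
        (fun x => β * Real.exp (-α - β * x) * Real.sqrt (α / (β * x)) *
          besselI1 (2 * Real.sqrt (α * β * x))) x)) = ∑' k, h k := by
      funext x
      rw [show (∑' k, h k) x = ∑' k, h k x from ENNReal.tsum_apply]
      by_cases hx : x ∈ Set.Ioi (0:ℝ)
      · have hx0 : (0:ℝ) < x := hx
        rw [Set.indicator_of_mem hx, bessel_aux_density hα hβ hx0]
        have hsumx : Summable (fun k : ℕ => c k * (x ^ k * Real.exp (-β * x))) := by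
          refine Summable.congr (f := fun k => (Real.exp (-α) * (α * β) * Real.exp (-β * x)) *
            ((α * β * x) ^ k / ((Nat.factorial k : ℝ) * (Nat.factorial (k + 1) : ℝ)))) ?_ ?_
          · exact (bessel_aux_summable_x (by positivity)).mul_left _
          · intro k
            simp only [hc_def]
            rw [mul_pow]
            ring
        rw [ENNReal.ofReal_tsum_of_nonneg (fun k =>
          mul_nonneg (hc_nonneg k) (by positivity)) hsumx]
        refine tsum_congr fun k => ?_
        simp only [hh_def, hF_def, Set.indicator_of_mem hx]
      · rw [Set.indicator_of_notMem hx]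
        simp only [hh_def, hF_def, Set.indicator_of_notMem hx]
        simp
    rw [hD, withDensity_tsum hh_meas]
  -- auxiliary functions for the term-wise integrals
  set G : ℕ → ℝ → ℝ := fun k => Set.indicator (Set.Ioi (0:ℝ))
      (fun x => c k * (x ^ (n + k) * Real.exp (-β * x))) with hG_def
  have hG_nonneg : ∀ k x, 0 ≤ G k x := by
    intro k x
    simp only [hG_def]
    apply Set.indicator_nonneg
    intro y hy
    have hy0 : (0:ℝ) < y := hy
    exact mul_nonneg (hc_nonneg k) (by positivity)
  have hG_int : ∀ k, Integrable (G k) := by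
    intro k
    simp only [hG_def]
    rw [integrable_indicator_iff measurableSet_Ioi]
    exact (bessel_aux_integrableOn (n + k) hβ).const_mul (c k)
  have hG_val : ∀ k, ∫ x, G k x =
      c k * ((Nat.factorial (n + k) : ℝ) / β ^ (n + k + 1)) := by
    intro k
    simp only [hG_def]
    rw [integral_indicator measurableSet_Ioi, integral_const_mul,
      bessel_aux_integral (n + k) hβ]
  set b : ℕ → ℝ := fun k => c k * ((Nat.factorial (n + k) : ℝ) / β ^ (n + k + 1)) with hb_def
  have hb_eq : ∀ k, b k = Real.exp (-α) / β ^ n * a k := by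
    intro k
    simp only [hb_def, hc_def, ha_def]
    have h2 := (hfac_pos k).ne'
    have h3 := (hfac_pos (k+1)).ne'
    field_simp
    rw [pow_add, pow_add, mul_pow]
    ring
  have hb_nonneg : ∀ k, 0 ≤ b k := by
    intro k
    have h1 := hfac_pos (n+k)
    simp only [hb_def]
    exact mul_nonneg (hc_nonneg k) (by positivity)
  have hb_summable : Summable b := by
    refine Summable.congr (f := fun k => Real.exp (-α) / β ^ n * a k) ?_ fun k => (hb_eq k).symm
    exact (bessel_aux_summable hα n).mul_left _
  -- pointwise product identity
  have hFG : ∀ k x, F k x * x ^ n = G k x := by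
    intro k x
    by_cases hx : x ∈ Set.Ioi (0:ℝ)
    · simp only [hF_def, hG_def, Set.indicator_of_mem hx]
      rw [pow_add]
      ring
    · simp only [hF_def, hG_def, Set.indicator_of_notMem hx, zero_mul]
  -- ENNReal pointwise identity
  have hENN : ∀ k x, h k x * ((‖x ^ n‖₊ : ℝ≥0) : ℝ≥0∞) =
      ENNReal.ofReal (G k x) := by
    intro k x
    by_cases hx : x ∈ Set.Ioi (0:ℝ)
    · have hx0 : (0:ℝ) < x := hx
      rw [show ((‖x ^ n‖₊ : ℝ≥0) : ℝ≥0∞) = ENNReal.ofReal (x ^ n) by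
        conv_rhs => rw [← Real.norm_of_nonneg (by positivity : (0:ℝ) ≤ x ^ n)]
        exact (ofReal_norm _).symm]
      simp only [hh_def]
      rw [← ENNReal.ofReal_mul (hF_nonneg k x)]
      exact congrArg _ (hFG k x)
    · simp only [hh_def, hF_def, Set.indicator_of_notMem hx, ENNReal.ofReal_zero, zero_mul,
        hG_def]
  -- term-wise lintegral of the norm
  have hlint : ∀ k, ∫⁻ x, ((‖x ^ n‖₊ : ℝ≥0) : ℝ≥0∞)
      ∂(MeasureTheory.volume.withDensity (h k)) = ENNReal.ofReal (b k) := by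
    intro k
    rw [lintegral_withDensity_eq_lintegral_mul MeasureTheory.volume (hh_meas k)
      ((continuous_pow n).measurable.nnnorm.coe_nnreal_ennreal)]
    simp only [Pi.mul_apply]
    calc ∫⁻ x, h k x * ((‖x ^ n‖₊ : ℝ≥0) : ℝ≥0∞) ∂MeasureTheory.volume
        = ∫⁻ x, ENNReal.ofReal (G k x) ∂MeasureTheory.volume := lintegral_congr (hENN k)
      _ = ENNReal.ofReal (∫ x, G k x) :=
          (ofReal_integral_eq_lintegral_ofReal (hG_int k)
            (Filter.Eventually.of_forall (hG_nonneg k))).symm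
      _ = ENNReal.ofReal (b k) := by rw [hG_val k]
  have hint_sum : Integrable (fun x : ℝ => x ^ n)
      (Measure.sum fun k => MeasureTheory.volume.withDensity (h k)) := by
    refine ⟨(continuous_pow n).aestronglyMeasurable, ?_⟩
    rw [hasFiniteIntegral_def, lintegral_sum_measure]
    calc ∑' k, ∫⁻ x, ((‖x ^ n‖₊ : ℝ≥0) : ℝ≥0∞) ∂(MeasureTheory.volume.withDensity (h k))
        = ∑' k, ENNReal.ofReal (b k) := tsum_congr hlint
      _ = ENNReal.ofReal (∑' k, b k) :=
          (ENNReal.ofReal_tsum_of_nonneg hb_nonneg hb_summable).symm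
      _ < ∞ := ENNReal.ofReal_lt_top
  have hint_dirac : Integrable (fun x : ℝ => x ^ n)
      (ENNReal.ofReal (Real.exp (-α)) • Measure.dirac (0:ℝ)) := by
    refine ⟨(continuous_pow n).aestronglyMeasurable, ?_⟩
    rw [hasFiniteIntegral_def, lintegral_smul_measure, lintegral_dirac]
    exact ENNReal.mul_lt_top ENNReal.ofReal_lt_top ENNReal.coe_lt_top
  have hint : Integrable (fun x : ℝ => x ^ n) (besselMeasure α β) := by
    rw [hmeq]; exact hint_dirac.add_measure hint_sum
  have hterm_int : ∀ k, ∫ x, x ^ n ∂(MeasureTheory.volume.withDensity (h k)) = b k := by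
    intro k
    have hmeas' : Measurable fun x => (F k x).toNNReal := (hF_meas k).real_toNNReal
    have heq : MeasureTheory.volume.withDensity (h k) =
        MeasureTheory.volume.withDensity (fun x => ((F k x).toNNReal : ℝ≥0∞)) := by
      simp only [hh_def]; rfl
    rw [heq, integral_withDensity_eq_integral_smul hmeas' (fun x : ℝ => x ^ n)]
    calc ∫ x, (F k x).toNNReal • x ^ n = ∫ x, G k x := by
          refine integral_congr_ae (Filter.Eventually.of_forall fun x => ?_)
          show (F k x).toNNReal • x ^ n = G k x
          rw [NNReal.smul_def, smul_eq_mul, Real.coe_toNNReal _ (hF_nonneg k x), hFG]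
      _ = b k := by rw [hG_val k]
  refine ⟨bessel_aux_summable hα n, hint, ?_⟩
  rw [hmeq, integral_add_measure hint_dirac hint_sum, integral_smul_measure, integral_dirac,
    zero_pow (by omega : n ≠ 0), smul_zero, zero_add, integral_sum_measure hint_sum]
  calc ∑' k, ∫ x, x ^ n ∂(MeasureTheory.volume.withDensity (h k))
      = ∑' k, b k := tsum_congr hterm_int
    _ = ∑' k, Real.exp (-α) / β ^ n * a k := tsum_congr hb_eq
    _ = Real.exp (-α) / β ^ n * ∑' k, a k := tsum_mul_left
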